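/- Let T be a contraction on H and define Π_D : H → H²(𝒟_{T*}) ⊕ closure(Ran Q) by Π_D h = (Σ_{n≥0} z^n D_{T*} T*^n h) ⊕ Q h, where Q² = SOT-lim T^n T*^n. Then Π_D is an isometry. -/

import Mathlib

open ContinuousLinearMap Filter

/-- Let `T` be a contraction, `D* = (1 - TT*)^{1/2}` and `Q ≥ 0` with
`Q² = SOT-lim T^n T*^n`. Then the Douglas embedding
`Π_D h = (Σ z^n D_{T*} T*^n h) ⊕ Qh` is an isometry:
`Σ_{n} ‖D_{T*}T*^n h‖² + ‖Qh‖² = ‖h‖²` (with the series summable). -/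
theorem stmt10 {H : Type*} [NormedAddCommGroup H] [InnerProductSpace ℂ H] [CompleteSpace H]
    (T Dstar Q : H →L[ℂ] H) (hT : ‖T‖ ≤ 1)
    (hDpos : Dstar.IsPositive) (hD2 : Dstar * Dstar = 1 - T * adjoint T)
    (hQpos : Q.IsPositive)
    (hQ : ∀ h : H, Tendsto (fun n : ℕ => (T ^ n * (adjoint T) ^ n) h) atTop
      (nhds ((Q * Q) h))) :
    ∀ h : H,
      Summable (fun n : ℕ => ‖Dstar (((adjoint T) ^ n) h)‖ ^ 2) ∧
      (∑' n : ℕ, ‖Dstar (((adjoint T) ^ n) h)‖ ^ 2) + ‖Q h‖ ^ 2 = ‖h‖ ^ 2 := by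
  intro h
  have hDsa : adjoint Dstar = Dstar := hDpos.isSelfAdjoint
  have hQsa : adjoint Q = Q := hQpos.isSelfAdjoint
  -- key pointwise identity
  have key : ∀ x : H, ‖Dstar x‖ ^ 2 = ‖x‖ ^ 2 - ‖adjoint T x‖ ^ 2 := by
    intro x
    have h1 : (inner ℂ (Dstar x) (Dstar x) : ℂ) = inner ℂ ((Dstar * Dstar) x) x := by
      have := adjoint_inner_left Dstar x (Dstar x)
      rw [hDsa] at this
      rw [ContinuousLinearMap.mul_apply]; exact this.symm
    have h2 : (inner ℂ ((Dstar * Dstar) x) x : ℂ)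
        = inner ℂ x x - inner ℂ (adjoint T x) (adjoint T x) := by
      rw [hD2]
      simp only [sub_apply, one_apply, ContinuousLinearMap.mul_apply, inner_sub_left]
      congr 1
      rw [← adjoint_adjoint T, adjoint_inner_left, adjoint_adjoint]
    have h3 := congrArg (RCLike.re (K := ℂ)) (h1.trans h2)
    rw [map_sub, inner_self_eq_norm_sq, inner_self_eq_norm_sq, inner_self_eq_norm_sq] at h3
    exact h3
  set a : ℕ → ℝ := fun n => ‖((adjoint T) ^ n) h‖ ^ 2 with ha
  have hterm : ∀ n, ‖Dstar (((adjoint T) ^ n) h)‖ ^ 2 = a n - a (n + 1) := by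
    intro n
    rw [key]
    congr 2
    rw [pow_succ', ContinuousLinearMap.mul_apply]
  -- limit of a
  have haL : Tendsto a atTop (nhds (‖Q h‖ ^ 2)) := by
    have h1 : ∀ n, a n = RCLike.re (inner ℂ ((T ^ n * (adjoint T) ^ n) h) h : ℂ) := by
      intro n
      have e : (inner ℂ ((T ^ n * (adjoint T) ^ n) h) h : ℂ)
          = inner ℂ (((adjoint T) ^ n) h) (((adjoint T) ^ n) h) := by
        rw [ContinuousLinearMap.mul_apply, ← adjoint_adjoint (T ^ n), adjoint_inner_left]
        congr 1
        rw [← star_eq_adjoint, ← star_eq_adjoint, star_pow]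
      rw [e, inner_self_eq_norm_sq]
    have h2 : RCLike.re (inner ℂ ((Q * Q) h) h : ℂ) = ‖Q h‖ ^ 2 := by
      have := adjoint_inner_left Q h (Q h)
      rw [hQsa] at this
      rw [ContinuousLinearMap.mul_apply, this, inner_self_eq_norm_sq]
    have h3 : Tendsto (fun n : ℕ => (inner ℂ ((T ^ n * (adjoint T) ^ n) h) h : ℂ))
        atTop (nhds (inner ℂ ((Q * Q) h) h)) := (hQ h).inner tendsto_const_nhds
    have h4 : Tendsto (fun n : ℕ => RCLike.re (inner ℂ ((T ^ n * (adjoint T) ^ n) h) h : ℂ))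
        atTop (nhds (RCLike.re (inner ℂ ((Q * Q) h) h : ℂ))) :=
      (RCLike.continuous_re.tendsto _).comp h3
    rw [h2] at h4
    have : a = fun n : ℕ => RCLike.re (inner ℂ ((T ^ n * (adjoint T) ^ n) h) h : ℂ) :=
      funext h1
    rw [this]
    exact h4
  have hnonneg : ∀ n, 0 ≤ ‖Dstar (((adjoint T) ^ n) h)‖ ^ 2 := fun n => sq_nonneg _
  have hsum : HasSum (fun n : ℕ => ‖Dstar (((adjoint T) ^ n) h)‖ ^ 2)
      (‖h‖ ^ 2 - ‖Q h‖ ^ 2) := by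
    rw [hasSum_iff_tendsto_nat_of_nonneg hnonneg]
    have hps : ∀ n, ∑ i ∈ Finset.range n, ‖Dstar (((adjoint T) ^ i) h)‖ ^ 2
        = a 0 - a n := by
      intro n
      simp only [hterm]
      exact Finset.sum_range_sub' a n
    simp only [hps]
    have ha0 : a 0 = ‖h‖ ^ 2 := by simp [ha]
    rw [ha0]
    exact tendsto_const_nhds.sub haL
  exact ⟨hsum.summable, by rw [hsum.tsum_eq]; ring⟩
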